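/- Let G be a graph with a distinguished vertex v and let r ≥ 1. Let F be the graph obtained from G by adding 2r new vertices a_1, b_1, …, a_r, b_r and the edges a_i b_i, v a_i, v b_i for 1 ≤ i ≤ r (i.e. F is the coalescence of G at v with the apex of K_1 ∨ rK_2). Then the multiplicity of 1 as an eigenvalue of the signless Laplacian Q(F) is at least r, and the multiplicity of 3 as an eigenvalue of Q(F) is at least r − 1. -/

import Mathlib

open SimpleGraph Finset

namespace Paper

/-- The cone `K₁ ∨ G`: a new apex vertex (`none`) joined to every vertex of `G`. -/
def cone {V : Type*} (G : SimpleGraph V) : SimpleGraph (Option V) where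
  Adj x y :=
    match x, y with
    | none, none => False
    | none, some _ => True
    | some _, none => True
    | some a, some b => G.Adj a b
  symm := by
    refine ⟨?_⟩
    rintro (_ | a) (_ | b) h
    · exact h
    · exact trivial
    · exact trivial
    · exact G.adj_symm h
  loopless := by
    refine ⟨?_⟩
    rintro (_ | a) h
    · exact h
    · exact G.irrefl h

/-- Disjoint union of an indexed family of graphs. -/
def sigmaGraph {ι : Type*} {V : ι → Type*} (G : ∀ i, SimpleGraph (V i)) :
    SimpleGraph (Σ i, V i) where
  Adj x y := ∃ (i : ι) (u v : V i), x = ⟨i, u⟩ ∧ y = ⟨i, v⟩ ∧ (G i).Adj u v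
  symm := by
    refine ⟨?_⟩
    rintro x y ⟨i, u, v, rfl, rfl, h⟩
    exact ⟨i, v, u, rfl, rfl, (G i).adj_symm h⟩
  loopless := by
    refine ⟨?_⟩
    rintro x ⟨i, u, v, rfl, h2, h⟩
    injection h2 with h3 h4
    subst h4
    exact (G i).irrefl h

/-- `q` disjoint copies of `K₂`. -/
def K2s (q : ℕ) : SimpleGraph (Σ _ : Fin q, Fin 2) :=
  sigmaGraph fun _ => (⊤ : SimpleGraph (Fin 2))

/-- The signless Laplacian matrix `Q(G) = D(G) + A(G)`. -/
noncomputable def QMatrix {V : Type*} [Fintype V] (G : SimpleGraph V) : Matrix V V ℝ :=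
  letI := Classical.decEq V
  letI := Classical.decRel G.Adj
  Matrix.diagonal (fun v => (G.degree v : ℝ)) + G.adjMatrix ℝ

/-- The signless Laplacian spectrum, as the multiset of roots of the characteristic
polynomial of `Q(G)` (with multiplicity). -/
noncomputable def Qspectrum {V : Type*} [Fintype V] (G : SimpleGraph V) : Multiset ℝ :=
  letI := Classical.decEq V
  (QMatrix G).charpoly.roots

/-- Multiplicity of `ρ` as a signless Laplacian eigenvalue of `G`. -/
noncomputable def Qmult {V : Type*} [Fintype V] (G : SimpleGraph V) (ρ : ℝ) : ℕ :=
  (Qspectrum G).count ρ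

/-- The `i`-th largest signless Laplacian eigenvalue (1-indexed), i.e. `χ_i(G)`. -/
noncomputable def Qeig {V : Type*} [Fintype V] (G : SimpleGraph V) (i : ℕ) : ℝ :=
  (((Qspectrum G).sort (· ≤ ·)).reverse).getD (i - 1) 0

/-- `G` is determined by its signless Laplacian spectrum. -/
def IsDQS {V : Type*} [Fintype V] (G : SimpleGraph V) : Prop :=
  ∀ (W : Type) [Fintype W] (F : SimpleGraph W),
    Qspectrum F = Qspectrum G → Nonempty (F ≃g G)

/-- The number of subgraphs of `G` isomorphic to `H`. -/
noncomputable def subgraphCount {V W : Type*} (G : SimpleGraph V) (H : SimpleGraph W) : ℕ :=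
  Nat.card {H' : G.Subgraph // Nonempty (H'.coe ≃g H)}

/-- The number of triangle subgraphs of `G` containing a vertex `v`. -/
noncomputable def triangleCountAt {V : Type*} (G : SimpleGraph V) (v : V) : ℕ :=
  Nat.card {H' : G.Subgraph //
    v ∈ H'.verts ∧ Nonempty (H'.coe ≃g (⊤ : SimpleGraph (Fin 3)))}

/-- Vertex degree (with classical decidability). -/
noncomputable def deg {V : Type*} [Fintype V] (G : SimpleGraph V) (v : V) : ℕ :=
  letI := Classical.decRel G.Adj
  G.degree v

/-- The multiset of vertex degrees of `G`. -/
noncomputable def degreeMultiset {V : Type*} [Fintype V] (G : SimpleGraph V) : Multiset ℕ :=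
  (Finset.univ : Finset V).val.map fun v => deg G v

/-- The maximum vertex degree of `G`. -/
noncomputable def maxDeg {V : Type*} [Fintype V] (G : SimpleGraph V) : ℕ :=
  letI := Classical.decRel G.Adj
  G.maxDegree

/-- `S_r(G) = trace(A(G)^r)`, the `r`-th spectral moment. -/
noncomputable def Smoment {V : Type*} [Fintype V] (G : SimpleGraph V) (r : ℕ) : ℝ :=
  letI := Classical.decEq V
  letI := Classical.decRel G.Adj
  ((G.adjMatrix ℝ) ^ r).trace

/-- `T_r(G) = trace(Q(G)^r)`, the `r`-th signless Laplacian spectral moment. -/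
noncomputable def Tmoment {V : Type*} [Fintype V] (G : SimpleGraph V) (r : ℕ) : ℝ :=
  letI := Classical.decEq V
  ((QMatrix G) ^ r).trace

/-- `∑_{uv ∈ E(G)} d_G(u) d_G(v)`. -/
noncomputable def edgeDegSum {V : Type*} [Fintype V] (G : SimpleGraph V) : ℕ :=
  letI := Classical.decEq V
  letI := Classical.decRel G.Adj
  ∑ e ∈ G.edgeFinset,
    Sym2.lift ⟨fun u v => G.degree u * G.degree v, fun _ _ => Nat.mul_comm _ _⟩ e

/-- The coalescence of `G` at `v` with the apex of `K₁ ∨ r K₂`: add `2r` new vertices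
`a_i, b_i` and edges `a_i b_i`, `v a_i`, `v b_i`. -/
def coalescenceK2s {V : Type*} (G : SimpleGraph V) (v : V) (r : ℕ) :
    SimpleGraph (V ⊕ (Fin r × Fin 2)) where
  Adj x y :=
    match x, y with
    | Sum.inl a, Sum.inl b => G.Adj a b
    | Sum.inl a, Sum.inr _ => a = v
    | Sum.inr _, Sum.inl b => b = v
    | Sum.inr p, Sum.inr p' => p.1 = p'.1 ∧ p.2 ≠ p'.2
  symm := by
    refine ⟨?_⟩
    rintro (a | p) (b | p') h
    · exact G.adj_symm h
    · exact h
    · exact h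
    · exact ⟨h.1.symm, h.2.symm⟩
  loopless := by
    refine ⟨?_⟩
    rintro (a | p) h
    · exact G.irrefl h
    · exact h.2 rfl


/-- `K₁ ∨ (C_{k 0} ∪ ⋯ ∪ C_{k (t-1)} ∪ q K₂ ∪ s K₁)`. -/
def coneCycles {t : ℕ} (k : Fin t → ℕ) (q s : ℕ) :
    SimpleGraph (Option ((Σ i, Fin (k i)) ⊕ ((Σ _ : Fin q, Fin 2) ⊕ Fin s))) :=
  cone ((sigmaGraph fun i => cycleGraph (k i)) ⊕g (K2s q ⊕g (⊥ : SimpleGraph (Fin s))))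

/-- `K₁ ∨ (C_k ∪ q K₂ ∪ s K₁)`. -/
def coneOneCycle (k q s : ℕ) :
    SimpleGraph (Option (Fin k ⊕ ((Σ _ : Fin q, Fin 2) ⊕ Fin s))) :=
  cone (cycleGraph k ⊕g (K2s q ⊕g (⊥ : SimpleGraph (Fin s))))

/-- `K₁ ∨ (C₄ ∪ P_{k-3} ∪ P₃ ∪ (q-2) K₂ ∪ s K₁)`. -/
def coneAlt (k q s : ℕ) :
    SimpleGraph (Option (Fin 4 ⊕ (Fin (k - 3) ⊕ (Fin 3 ⊕ ((Σ _ : Fin (q - 2), Fin 2) ⊕ Fin s))))) :=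
  cone (cycleGraph 4 ⊕g (pathGraph (k - 3) ⊕g (pathGraph 3 ⊕g
    (K2s (q - 2) ⊕g (⊥ : SimpleGraph (Fin s))))))

/-- `K₁ ∨ (C₃ ∪ C_{k 0} ∪ ⋯ ∪ C_{k (t'-1)} ∪ q K₂ ∪ s K₁)`. -/
def coneC3Cycles {t' : ℕ} (k : Fin t' → ℕ) (q s : ℕ) :
    SimpleGraph (Option (Fin 3 ⊕ ((Σ i, Fin (k i)) ⊕ ((Σ _ : Fin q, Fin 2) ⊕ Fin s)))) :=
  cone (cycleGraph 3 ⊕g ((sigmaGraph fun i => cycleGraph (k i)) ⊕g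
    (K2s q ⊕g (⊥ : SimpleGraph (Fin s)))))

/-- `K₁ ∨ (K_{1,3} ∪ C_{k 0} ∪ ⋯ ∪ C_{k (t'-1)} ∪ q K₂ ∪ s' K₁)`. -/
def coneStar {t' : ℕ} (k : Fin t' → ℕ) (q s' : ℕ) :
    SimpleGraph (Option ((Fin 1 ⊕ Fin 3) ⊕ ((Σ i, Fin (k i)) ⊕ ((Σ _ : Fin q, Fin 2) ⊕ Fin s')))) :=
  cone (completeBipartiteGraph (Fin 1) (Fin 3) ⊕g ((sigmaGraph fun i => cycleGraph (k i)) ⊕g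
    (K2s q ⊕g (⊥ : SimpleGraph (Fin s')))))

/-- `K₁ ∨ (P_{l 0} ∪ ⋯ ∪ P_{l (q-1)} ∪ s K₁)`. -/
def conePaths {q : ℕ} (l : Fin q → ℕ) (s : ℕ) :
    SimpleGraph (Option ((Σ i, Fin (l i)) ⊕ Fin s)) :=
  cone ((sigmaGraph fun i => pathGraph (l i)) ⊕g (⊥ : SimpleGraph (Fin s)))

/-- `K₁ ∨ (C_{k 0} ∪ ⋯ ∪ C_{k (z-1)} ∪ P_{l 0} ∪ ⋯ ∪ P_{l (q-1)} ∪ s K₁)`. -/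
def coneCyclesPaths {z q : ℕ} (k : Fin z → ℕ) (l : Fin q → ℕ) (s : ℕ) :
    SimpleGraph (Option ((Σ i, Fin (k i)) ⊕ ((Σ i, Fin (l i)) ⊕ Fin s))) :=
  cone ((sigmaGraph fun i => cycleGraph (k i)) ⊕g
    ((sigmaGraph fun i => pathGraph (l i)) ⊕g (⊥ : SimpleGraph (Fin s))))

/-- The quartic polynomial `p_{n,q,s}` from the paper. -/
noncomputable def quartic (n q s : ℕ) (x : ℝ) : ℝ :=
  x ^ 4 - ((n : ℝ) + 8) * x ^ 3 + (8 * (n : ℝ) + 15) * x ^ 2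
    + (4 * (q : ℝ) + 4 * (s : ℝ) - 19 * (n : ℝ) + 4) * x
    + (12 * (n : ℝ) - 4 * (q : ℝ) - 12 * (s : ℝ) - 12)

/-- The multiset `{3 + 2 cos (2jπ/k_i) : 1 ≤ j ≤ k_i - 1, 1 ≤ i ≤ t}`. -/
noncomputable def cycleEigs {t : ℕ} (k : Fin t → ℕ) : Multiset ℝ :=
  ∑ i : Fin t, (Multiset.range (k i - 1)).map
    (fun j => 3 + 2 * Real.cos (2 * ((j : ℝ) + 1) * Real.pi / (k i : ℝ)))


section Aux
open Polynomial Matrix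

lemma charpoly_conj_unitary {n : Type*} [Fintype n] [DecidableEq n]
    (U D : Matrix n n ℝ) (hU : U * star U = 1) :
    (U * D * star U).charpoly = D.charpoly := by
  have hmap : (U.map (C : ℝ →+* ℝ[X])) * ((star U).map C) = 1 := by
    rw [← Matrix.map_mul, hU, Matrix.map_one _ (map_zero C) (map_one C)]
  have hcm : charmatrix (U * D * star U)
      = U.map C * charmatrix D * (star U).map C := by
    unfold charmatrix
    rw [Matrix.mul_sub, Matrix.sub_mul]
    congr 1
    · rw [scalar_apply, ← smul_eq_mul_diagonal, Matrix.smul_mul, hmap,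
        smul_eq_diagonal_mul, Matrix.mul_one]
    · simp only [RingHom.mapMatrix_apply]
      rw [← Matrix.map_mul, ← Matrix.map_mul]
  have hdet : ∀ B : Matrix n n ℝ[X], (U.map C * B * (star U).map C).det = B.det := by
    intro B
    rw [Matrix.det_mul, Matrix.det_mul, mul_comm, ← mul_assoc, ← Matrix.det_mul,
      ← Matrix.map_mul, mul_eq_one_comm.mp hU, Matrix.map_one _ (map_zero C) (map_one C)]
    simp
  rw [Matrix.charpoly, hcm, hdet, Matrix.charpoly]

lemma charpoly_diagonal {n : Type*} [Fintype n] [DecidableEq n] (d : n → ℝ) :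
    (Matrix.diagonal d).charpoly = ∏ i, (X - C (d i)) := by
  have : charmatrix (Matrix.diagonal d) = Matrix.diagonal (fun i => X - C (d i)) := by
    ext i j
    rcases eq_or_ne i j with rfl | h
    · simp
    · simp [h, Matrix.diagonal_apply_ne _ h]
  rw [Matrix.charpoly, this, Matrix.det_diagonal]

lemma charpoly_isHermitian_eq {n : Type*} [Fintype n] [DecidableEq n]
    (A : Matrix n n ℝ) (hA : A.IsHermitian) :
    A.charpoly = ∏ i, (X - C (hA.eigenvalues i)) := by
  have hU : (hA.eigenvectorUnitary : Matrix n n ℝ) * star (hA.eigenvectorUnitary : Matrix n n ℝ) = 1 :=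
    Matrix.mem_unitaryGroup_iff.mp hA.eigenvectorUnitary.2
  have hst : A = (hA.eigenvectorUnitary : Matrix n n ℝ) * Matrix.diagonal hA.eigenvalues
      * star (hA.eigenvectorUnitary : Matrix n n ℝ) := by
    have := hA.spectral_theorem
    simpa using this
  conv_lhs => rw [hst]
  rw [charpoly_conj_unitary _ _ hU, charpoly_diagonal]

open Finset in
lemma finrank_ker_le_count {n : Type*} [Fintype n] [DecidableEq n]
    (A : Matrix n n ℝ) (hA : A.IsHermitian) (ρ : ℝ) :
    Module.finrank ℝ (LinearMap.ker (A - ρ • (1 : Matrix n n ℝ)).mulVecLin)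
      ≤ A.charpoly.roots.count ρ := by
  classical
  have hroots : A.charpoly.roots = Finset.univ.val.map hA.eigenvalues := by
    rw [charpoly_isHermitian_eq A hA]
    have h2 : (∏ i, (X - C (hA.eigenvalues i)))
        = ((Finset.univ.val.map hA.eigenvalues).map fun a => X - C a).prod := by
      rw [Multiset.map_map]
      rfl
    rw [h2, Polynomial.roots_multiset_prod_X_sub_C]
  have hcount : A.charpoly.roots.count ρ
      = (Finset.univ.filter (fun i => hA.eigenvalues i = ρ)).card := by
    rw [hroots, Multiset.count_map]
    show (Multiset.filter _ Finset.univ.val).card = (Multiset.filter _ Finset.univ.val).card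
    congr 1
    apply Multiset.filter_congr
    intro x _
    exact eq_comm
  -- rank computation
  have hU : (hA.eigenvectorUnitary : Matrix n n ℝ)
      * star (hA.eigenvectorUnitary : Matrix n n ℝ) = 1 :=
    Matrix.mem_unitaryGroup_iff.mp hA.eigenvectorUnitary.2
  have hdetU : IsUnit (hA.eigenvectorUnitary : Matrix n n ℝ).det := by
    apply IsUnit.of_mul_eq_one (star (hA.eigenvectorUnitary : Matrix n n ℝ)).det
    rw [← Matrix.det_mul, hU, Matrix.det_one]
  have hdetsU : IsUnit (star (hA.eigenvectorUnitary : Matrix n n ℝ)).det := by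
    apply IsUnit.of_mul_eq_one (hA.eigenvectorUnitary : Matrix n n ℝ).det
    rw [← Matrix.det_mul, mul_eq_one_comm.mp hU, Matrix.det_one]
  have hconj : A - ρ • (1 : Matrix n n ℝ)
      = (hA.eigenvectorUnitary : Matrix n n ℝ)
        * Matrix.diagonal (fun i => hA.eigenvalues i - ρ)
        * star (hA.eigenvectorUnitary : Matrix n n ℝ) := by
    have hst : A = (hA.eigenvectorUnitary : Matrix n n ℝ) * Matrix.diagonal hA.eigenvalues
        * star (hA.eigenvectorUnitary : Matrix n n ℝ) := by
      have := hA.spectral_theorem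
      simpa using this
    have h1 : Matrix.diagonal (fun i => hA.eigenvalues i - ρ)
        = Matrix.diagonal hA.eigenvalues - ρ • (1 : Matrix n n ℝ) := by
      ext i j
      rcases eq_or_ne i j with rfl | h
      · simp [Matrix.one_apply_eq]
      · simp [Matrix.diagonal_apply_ne _ h, Matrix.one_apply_ne h]
    rw [h1, Matrix.mul_sub, Matrix.sub_mul, ← hst]
    congr 1
    rw [Matrix.mul_smul, Matrix.smul_mul, Matrix.mul_one, hU]
  have hrank : (A - ρ • (1 : Matrix n n ℝ)).rank
      = (Finset.univ.filter (fun i => ¬ hA.eigenvalues i = ρ)).card := by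
    rw [hconj, Matrix.rank_mul_eq_left_of_isUnit_det _ _ hdetsU,
      Matrix.rank_mul_eq_right_of_isUnit_det _ _ hdetU, Matrix.rank_diagonal]
    rw [Fintype.card_subtype]
    congr 1
    apply Finset.filter_congr
    intro i _
    simp [sub_eq_zero]
  have hrn : (A - ρ • (1 : Matrix n n ℝ)).rank
      + Module.finrank ℝ (LinearMap.ker (A - ρ • (1 : Matrix n n ℝ)).mulVecLin)
      = Fintype.card n := by
    have := LinearMap.finrank_range_add_finrank_ker (A - ρ • (1 : Matrix n n ℝ)).mulVecLin
    rwa [Module.finrank_fintype_fun_eq_card] at this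
  have hsplit := Finset.card_filter_add_card_filter_not
    (s := (Finset.univ : Finset n)) (p := fun i => hA.eigenvalues i = ρ)
  rw [Finset.card_univ] at hsplit
  omega

lemma card_le_finrank_ker {M : Type*} [AddCommGroup M] [Module ℝ M] [FiniteDimensional ℝ M]
    {m : ℕ} (L : M →ₗ[ℝ] M) (x : Fin m → M) (hmem : ∀ i, L (x i) = 0)
    (hli : LinearIndependent ℝ x) : m ≤ Module.finrank ℝ (LinearMap.ker L) := by
  let y : Fin m → LinearMap.ker L := fun i => ⟨x i, by simp [LinearMap.mem_ker, hmem i]⟩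
  have hy : LinearIndependent ℝ y := by
    apply LinearIndependent.of_comp (LinearMap.ker L).subtype
    exact hli
  simpa using hy.fintype_card_le_finrank

end Aux

section Graph
open Matrix Polynomial

variable {V : Type*} [Fintype V] (G : SimpleGraph V) (v : V) (r : ℕ)

lemma adj_inr_inl (p : Fin r × Fin 2) (a : V) :
    (coalescenceK2s G v r).Adj (Sum.inr p) (Sum.inl a) ↔ a = v := Iff.rfl

lemma adj_inl_inr (p : Fin r × Fin 2) (a : V) :
    (coalescenceK2s G v r).Adj (Sum.inl a) (Sum.inr p) ↔ a = v := Iff.rfl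

lemma adj_inr_inr (p q : Fin r × Fin 2) :
    (coalescenceK2s G v r).Adj (Sum.inr p) (Sum.inr q) ↔ p.1 = q.1 ∧ p.2 ≠ q.2 := Iff.rfl

lemma degree_inr [DecidableRel (coalescenceK2s G v r).Adj] (p : Fin r × Fin 2) :
    (coalescenceK2s G v r).degree (Sum.inr p) = 2 := by
  classical
  have hne : ∀ a b : Fin 2, a ≠ b ↔ b = a + 1 := by decide
  have h : (coalescenceK2s G v r).neighborFinset (Sum.inr p)
      = {Sum.inl v, Sum.inr (p.1, p.2 + 1)} := by
    ext w
    rw [SimpleGraph.mem_neighborFinset]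
    rcases w with a | q
    · simp [adj_inr_inl]
    · rw [adj_inr_inr]
      simp only [Finset.mem_insert, Finset.mem_singleton, Sum.inr.injEq, Prod.ext_iff, hne,
        reduceCtorEq, false_or]
      tauto
  rw [SimpleGraph.degree, h, Finset.card_insert_of_notMem (by simp), Finset.card_singleton]
/-- eigenvector for eigenvalue 1 -/
lemma mulVec_eig_one [DecidableEq (V ⊕ Fin r × Fin 2)] (i : Fin r) :
    QMatrix (coalescenceK2s G v r) *ᵥ
      (Pi.single (Sum.inr (i, (0 : Fin 2))) (1 : ℝ) - Pi.single (Sum.inr (i, 1)) 1)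
    = (Pi.single (Sum.inr (i, (0 : Fin 2))) (1 : ℝ) - Pi.single (Sum.inr (i, 1)) 1) := by
  classical
  rw [Matrix.mulVec_sub, Matrix.mulVec_single, Matrix.mulVec_single]
  funext u
  simp only [Pi.sub_apply, mul_one, QMatrix, Matrix.add_apply, Matrix.diagonal_apply,
    SimpleGraph.adjMatrix_apply, Pi.single_apply]
  rcases u with a | ⟨j, k⟩
  · simp [adj_inl_inr]
  · by_cases hj : j = i
    · subst hj
      have h2 : ((coalescenceK2s G v r).degree (Sum.inr (j, (0:Fin 2))) : ℝ) = 2 := by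
        rw [degree_inr]; norm_num
      have h2' : ((coalescenceK2s G v r).degree (Sum.inr (j, (1:Fin 2))) : ℝ) = 2 := by
        rw [degree_inr]; norm_num
      fin_cases k <;>
        (simp_all [adj_inr_inr, Prod.ext_iff, show (0:Fin 2) ≠ 1 by decide,
          show (1:Fin 2) ≠ 0 by decide]) <;> norm_num
    · simp [adj_inr_inr, hj, Prod.ext_iff, Ne.symm hj]

/-- eigenvector for eigenvalue 3 -/
lemma mulVec_eig_three [DecidableEq (V ⊕ Fin r × Fin 2)] (a b : Fin r) (hab : a ≠ b) :
    QMatrix (coalescenceK2s G v r) *ᵥ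
      ((Pi.single (Sum.inr (a, (0 : Fin 2))) (1 : ℝ) + Pi.single (Sum.inr (a, 1)) 1)
        - (Pi.single (Sum.inr (b, (0 : Fin 2))) (1 : ℝ) + Pi.single (Sum.inr (b, 1)) 1))
    = (3 : ℝ) • ((Pi.single (Sum.inr (a, (0 : Fin 2))) (1 : ℝ) + Pi.single (Sum.inr (a, 1)) 1)
        - (Pi.single (Sum.inr (b, (0 : Fin 2))) (1 : ℝ) + Pi.single (Sum.inr (b, 1)) 1)) := by
  classical
  rw [Matrix.mulVec_sub, Matrix.mulVec_add, Matrix.mulVec_add, Matrix.mulVec_single,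
    Matrix.mulVec_single, Matrix.mulVec_single, Matrix.mulVec_single]
  funext u
  simp only [Pi.sub_apply, Pi.add_apply, Pi.smul_apply, smul_eq_mul, mul_one, QMatrix,
    Matrix.add_apply, Matrix.diagonal_apply, SimpleGraph.adjMatrix_apply, Pi.single_apply]
  rcases u with c | ⟨j, k⟩
  · simp [adj_inl_inr]
  · have hd : ∀ p : Fin r × Fin 2, ((coalescenceK2s G v r).degree (Sum.inr p) : ℝ) = 2 := by
      intro p; rw [degree_inr]; norm_num
    by_cases hja : j = a
    · subst hja
      have hjb : j ≠ b := hab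
      fin_cases k <;>
        (simp_all [adj_inr_inr, Prod.ext_iff, show (0:Fin 2) ≠ 1 by decide,
          show (1:Fin 2) ≠ 0 by decide]) <;> norm_num
    · by_cases hjb : j = b
      · subst hjb
        fin_cases k <;>
          (simp_all [adj_inr_inr, Prod.ext_iff, show (0:Fin 2) ≠ 1 by decide,
            show (1:Fin 2) ≠ 0 by decide]) <;> norm_num
      · simp [adj_inr_inr, hja, hjb, Prod.ext_iff, Ne.symm hja, Ne.symm hjb]

lemma QMatrix_isHermitian {W : Type*} [Fintype W] (H : SimpleGraph W) :
    (QMatrix H).IsHermitian := by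
  classical
  show _ = _
  ext i j
  simp only [QMatrix, Matrix.conjTranspose_apply, Matrix.add_apply,
    SimpleGraph.adjMatrix_apply, star_trivial]
  rcases eq_or_ne i j with rfl | h
  · rfl
  · simp [Matrix.diagonal_apply_ne, h, Ne.symm h, H.adj_comm j i]

end Graph

/-- Lemma 3.2: if `F` is the coalescence of `G` at `v` with the apex of `K₁ ∨ r K₂`
(`r ≥ 1`), then `1` is a `Q`-eigenvalue of `F` of multiplicity at least `r` and `3` is a
`Q`-eigenvalue of `F` of multiplicity at least `r - 1`. -/
theorem coalescence_Qmult_one_three {V : Type*} [Fintype V]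
    (G : SimpleGraph V) (v : V) (r : ℕ) (hr : 1 ≤ r) :
    r ≤ Qmult (coalescenceK2s G v r) 1 ∧ r - 1 ≤ Qmult (coalescenceK2s G v r) 3 := by
  classical
  letI : DecidableEq (V ⊕ Fin r × Fin 2) := Classical.decEq _
  have hHerm : (QMatrix (coalescenceK2s G v r)).IsHermitian :=
    QMatrix_isHermitian (coalescenceK2s G v r)
  have key1 := @finrank_ker_le_count _ _ (Classical.decEq _) (QMatrix (coalescenceK2s G v r)) hHerm 1
  have key3 := @finrank_ker_le_count _ _ (Classical.decEq _) (QMatrix (coalescenceK2s G v r)) hHerm 3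
  unfold Qmult Qspectrum
  constructor
  · refine le_trans ?_ key1
    refine card_le_finrank_ker _
      (fun i : Fin r =>
        (Pi.single (Sum.inr (i, (0 : Fin 2))) (1 : ℝ) - Pi.single (Sum.inr (i, 1)) 1))
      (fun i => ?_) ?_
    · beta_reduce
      rw [Matrix.mulVecLin_apply, Matrix.sub_mulVec, Matrix.smul_mulVec,
        Matrix.one_mulVec, mulVec_eig_one G v r i, one_smul, sub_self]
    · apply LinearIndependent.of_comp
        (LinearMap.funLeft ℝ ℝ (fun j : Fin r => (Sum.inr (j, (0 : Fin 2)) : V ⊕ Fin r × Fin 2)))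
      have hcomp : (LinearMap.funLeft ℝ ℝ (fun j : Fin r => (Sum.inr (j, (0 : Fin 2)) : V ⊕ Fin r × Fin 2))) ∘
          (fun i : Fin r =>
            (Pi.single (Sum.inr (i, (0 : Fin 2))) (1 : ℝ) - Pi.single (Sum.inr (i, 1)) 1))
          = fun i => Pi.single i (1 : ℝ) := by
        funext i j
        simp [LinearMap.funLeft, Pi.single_apply, Prod.ext_iff,
          show (0 : Fin 2) ≠ 1 by decide, eq_comm]
      rw [hcomp]
      have hb : ⇑(Pi.basisFun ℝ (Fin r)) = fun i => Pi.single i (1 : ℝ) := by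
        funext i; simp
      rw [← hb]
      exact (Pi.basisFun ℝ (Fin r)).linearIndependent
  · refine le_trans ?_ key3
    have hlast : r - 1 < r := by omega
    set L : Fin r := ⟨r - 1, hlast⟩ with hL
    have hc : ∀ i : Fin (r - 1), (⟨i.1, lt_of_lt_of_le i.2 (Nat.sub_le r 1)⟩ : Fin r) ≠ L := by
      intro i hi
      have := congrArg Fin.val hi
      simp only [hL] at this
      omega
    refine card_le_finrank_ker _
      (fun i : Fin (r - 1) =>
        ((Pi.single (Sum.inr ((⟨i.1, lt_of_lt_of_le i.2 (Nat.sub_le r 1)⟩ : Fin r),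
            (0 : Fin 2))) (1 : ℝ)
          + Pi.single (Sum.inr (⟨i.1, lt_of_lt_of_le i.2 (Nat.sub_le r 1)⟩, 1)) 1)
        - (Pi.single (Sum.inr (L, (0 : Fin 2))) (1 : ℝ) + Pi.single (Sum.inr (L, 1)) 1)))
      (fun i => ?_) ?_
    · beta_reduce
      rw [Matrix.mulVecLin_apply, Matrix.sub_mulVec, Matrix.smul_mulVec,
        Matrix.one_mulVec, mulVec_eig_three G v r _ _ (hc i), sub_self]
    · apply LinearIndependent.of_comp
        (LinearMap.funLeft ℝ ℝ (fun j : Fin (r - 1) =>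
          (Sum.inr ((⟨j.1, lt_of_lt_of_le j.2 (Nat.sub_le r 1)⟩ : Fin r), (0 : Fin 2)) : V ⊕ Fin r × Fin 2)))
      have hcomp : (LinearMap.funLeft ℝ ℝ (fun j : Fin (r - 1) =>
          (Sum.inr ((⟨j.1, lt_of_lt_of_le j.2 (Nat.sub_le r 1)⟩ : Fin r), (0 : Fin 2)) : V ⊕ Fin r × Fin 2))) ∘
          (fun i : Fin (r - 1) =>
            ((Pi.single (Sum.inr ((⟨i.1, lt_of_lt_of_le i.2 (Nat.sub_le r 1)⟩ : Fin r),
                (0 : Fin 2))) (1 : ℝ)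
              + Pi.single (Sum.inr (⟨i.1, lt_of_lt_of_le i.2 (Nat.sub_le r 1)⟩, 1)) 1)
            - (Pi.single (Sum.inr (L, (0 : Fin 2))) (1 : ℝ) + Pi.single (Sum.inr (L, 1)) 1)))
          = fun i => Pi.single i (1 : ℝ) := by
        funext i j
        have h1 := hc j
        have h2 : (j : ℕ) ≠ r - 1 := Nat.ne_of_lt j.2
        have h3 : (j : ℕ) ≠ (L : ℕ) := h2
        simp [LinearMap.funLeft, Pi.single_apply, Prod.ext_iff, Fin.ext_iff,
          show (0 : Fin 2) ≠ 1 by decide, eq_comm, h1, h2, h3]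
      rw [hcomp]
      have hb : ⇑(Pi.basisFun ℝ (Fin (r - 1))) = fun i => Pi.single i (1 : ℝ) := by
        funext i; simp
      rw [← hb]
      exact (Pi.basisFun ℝ (Fin (r - 1))).linearIndependent

end Paper
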